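/- Let F be a field, p(x) ∈ F[x] a polynomial of degree h ≥ 2, and S ⊆ F a finite set such that p(s) ≠ 0 for all s ∈ S. Then the set {x − s : s ∈ S} of residue classes is a B_h set (with multiplication as the group operation) in the group of units of the quotient ring F[x]/⟨p(x)⟩, and it has exactly |S| elements. -/

import Mathlib

open Polynomial

/-- `A` is a `B_h[g]` set in the commutative monoid `G` (written multiplicatively):
every element `b` has at most `g` distinct representations (as multisets) as a product
of `h` elements of `A`. -/
def IsMulBhg {G : Type*} [CommMonoid G] (A : Set G) (h g : ℕ) : Prop :=
  ∀ b : G, ∀ s : Finset (Multiset G),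
    (∀ m ∈ s, Multiset.card m = h ∧ (∀ x ∈ m, x ∈ A) ∧ m.prod = b) → s.card ≤ g

lemma mk_X_sub_C_inj {F : Type*} [Field F] (p : F[X]) (hdeg : 1 ≤ p.natDegree) {s t : F}
    (h : Ideal.Quotient.mk (Ideal.span {p}) (X - C s)
       = Ideal.Quotient.mk (Ideal.span {p}) (X - C t)) : s = t := by
  by_contra hne
  have h2 := Ideal.Quotient.eq.mp h
  rw [Ideal.mem_span_singleton] at h2
  have h1 : (X - C s) - (X - C t) = C (t - s) := by rw [map_sub]; ring
  rw [h1] at h2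
  have hC : (C (t - s) : F[X]) ≠ 0 := by
    rw [ne_eq, Polynomial.C_eq_zero, sub_eq_zero]
    exact fun e => hne e.symm
  have := Polynomial.natDegree_le_of_dvd h2 hC
  simp [Polynomial.natDegree_C] at this
  omega

theorem stmt_3 {F : Type*} [Field F] (p : F[X]) (h : ℕ) (hh : 2 ≤ h)
    (hdeg : p.natDegree = h) (S : Finset F) (hS : ∀ s ∈ S, p.eval s ≠ 0) :
    (∀ s ∈ S, IsUnit (Ideal.Quotient.mk (Ideal.span {p}) (X - C s))) ∧
    IsMulBhg {u : (F[X] ⧸ Ideal.span {p})ˣ |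
        ∃ s ∈ S, (u : F[X] ⧸ Ideal.span {p}) = Ideal.Quotient.mk (Ideal.span {p}) (X - C s)}
      h 1 ∧
    Set.ncard {u : (F[X] ⧸ Ideal.span {p})ˣ |
        ∃ s ∈ S, (u : F[X] ⧸ Ideal.span {p}) = Ideal.Quotient.mk (Ideal.span {p}) (X - C s)}
      = S.card := by
  classical
  have hp0 : p ≠ 0 := fun h0 => by simp [h0] at hdeg; omega
  have hdeg1 : 1 ≤ p.natDegree := by omega
  set f : F → F[X] ⧸ Ideal.span {p} := fun s => Ideal.Quotient.mk (Ideal.span {p}) (X - C s)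
    with hf
  -- Part 1
  have part1 : ∀ s ∈ S, IsUnit (Ideal.Quotient.mk (Ideal.span {p}) (X - C s)) := by
    intro s hs
    have hirr : Irreducible (X - C s) := Polynomial.irreducible_X_sub_C s
    have hnd : ¬ (X - C s) ∣ p := by
      rw [Polynomial.dvd_iff_isRoot]
      exact hS s hs
    obtain ⟨a, b, hab⟩ := hirr.coprime_iff_not_dvd.mpr hnd
    refine IsUnit.of_mul_eq_one (Ideal.Quotient.mk _ a) ?_
    have : Ideal.Quotient.mk (Ideal.span {p}) (a * (X - C s) + b * p) = 1 := by
      rw [hab]; simp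
    rw [map_add, map_mul, map_mul, Ideal.Quotient.eq_zero_iff_mem.mpr
      (Ideal.mem_span_singleton_self p)] at this
    rw [mul_comm] at this
    simpa using this
  refine ⟨part1, ?_, ?_⟩
  · -- B_h part
    intro b s hs
    rw [Finset.card_le_one]
    intro m₁ hm₁ m₂ hm₂
    obtain ⟨hc₁, hA₁, hp₁⟩ := hs m₁ hm₁
    obtain ⟨hc₂, hA₂, hp₂⟩ := hs m₂ hm₂
    have key : ∀ m : Multiset (F[X] ⧸ Ideal.span {p})ˣ,
        (∀ x ∈ m, ∃ s, (x : F[X] ⧸ Ideal.span {p}) = f s) →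
        ∃ T : Multiset F, Multiset.card T = Multiset.card m ∧
          m.map (Units.val) = T.map f := by
      intro m hmem
      induction m using Multiset.induction with
      | empty => exact ⟨0, by simp, by simp⟩
      | cons a t ih =>
        obtain ⟨T, hT1, hT2⟩ := ih (fun x hx => hmem x (Multiset.mem_cons_of_mem hx))
        obtain ⟨s, hs⟩ := hmem a (Multiset.mem_cons_self a t)
        exact ⟨s ::ₘ T, by simp [hT1], by simp [hs, hT2]⟩
    obtain ⟨T₁, hT₁c, hT₁⟩ := key m₁ (fun x hx => (hA₁ x hx).imp (fun s hs => hs.2))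
    obtain ⟨T₂, hT₂c, hT₂⟩ := key m₂ (fun x hx => (hA₂ x hx).imp (fun s hs => hs.2))
    rw [hc₁] at hT₁c; rw [hc₂] at hT₂c
    -- products in quotient are equal
    have hq : Ideal.Quotient.mk (Ideal.span {p}) (T₁.map fun a => X - C a).prod
            = Ideal.Quotient.mk (Ideal.span {p}) (T₂.map fun a => X - C a).prod := by
      have e₁ : ((Ideal.Quotient.mk (Ideal.span {p})) (T₁.map fun a => X - C a).prod)
          = (m₁.map Units.val).prod := by
        rw [hT₁, map_multiset_prod, Multiset.map_map]; rfl
      have e₂ : ((Ideal.Quotient.mk (Ideal.span {p})) (T₂.map fun a => X - C a).prod)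
          = (m₂.map Units.val).prod := by
        rw [hT₂, map_multiset_prod, Multiset.map_map]; rfl
      have e₃ : ∀ m : Multiset (F[X] ⧸ Ideal.span {p})ˣ,
          (m.map Units.val).prod = ((m.prod : (F[X] ⧸ Ideal.span {p})ˣ) : F[X] ⧸ Ideal.span {p}) :=
        fun m => (Multiset.prod_hom m (Units.coeHom (F[X] ⧸ Ideal.span {p})))
      rw [e₁, e₂, e₃, e₃, hp₁, hp₂]
    -- monic degree-h polynomials equal mod p are equal
    set q₁ : F[X] := (T₁.map fun a => X - C a).prod with hq₁
    set q₂ : F[X] := (T₂.map fun a => X - C a).prod with hq₂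
    have hm1 : q₁.Monic := monic_multiset_prod_of_monic _ _ (fun a _ => monic_X_sub_C a)
    have hm2 : q₂.Monic := monic_multiset_prod_of_monic _ _ (fun a _ => monic_X_sub_C a)
    have hd1 : q₁.natDegree = h := by
      rw [hq₁, Polynomial.natDegree_multiset_prod_X_sub_C_eq_card, hT₁c]
    have hd2 : q₂.natDegree = h := by
      rw [hq₂, Polynomial.natDegree_multiset_prod_X_sub_C_eq_card, hT₂c]
    have hqq : q₁ = q₂ := by
      by_contra hne
      have hsub : q₁ - q₂ ≠ 0 := sub_ne_zero.mpr hne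
      have hdvd : p ∣ q₁ - q₂ := by
        rw [← Ideal.mem_span_singleton]
        exact Ideal.Quotient.eq.mp hq
      have hle : p.degree ≤ (q₁ - q₂).degree := Polynomial.degree_le_of_dvd hdvd hsub
      have hlt : (q₁ - q₂).degree < q₁.degree :=
        Polynomial.degree_sub_lt (by rw [Polynomial.degree_eq_natDegree hm1.ne_zero,
          Polynomial.degree_eq_natDegree hm2.ne_zero, hd1, hd2])
          hm1.ne_zero (by rw [hm1.leadingCoeff, hm2.leadingCoeff])
      have : p.degree < q₁.degree := lt_of_le_of_lt hle hlt
      rw [Polynomial.degree_eq_natDegree hp0, Polynomial.degree_eq_natDegree hm1.ne_zero,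
        hdeg, hd1] at this
      exact lt_irrefl _ this
    have hTT : T₁ = T₂ := by
      have := congrArg Polynomial.roots hqq
      rwa [hq₁, hq₂, Polynomial.roots_multiset_prod_X_sub_C,
        Polynomial.roots_multiset_prod_X_sub_C] at this
    have : m₁.map Units.val = m₂.map Units.val := by rw [hT₁, hT₂, hTT]
    exact Multiset.map_injective Units.val_injective this
  · -- cardinality part
    set e : F → (F[X] ⧸ Ideal.span {p})ˣ := fun s =>
      if hs : s ∈ S then (part1 s hs).unit else 1 with he
    have hval : ∀ s ∈ S, ((e s : (F[X] ⧸ Ideal.span {p})ˣ) : F[X] ⧸ Ideal.span {p}) = f s := by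
      intro s hs
      simp only [he, dif_pos hs]
      exact (part1 s hs).unit_spec
    have hset : {u : (F[X] ⧸ Ideal.span {p})ˣ |
        ∃ s ∈ S, (u : F[X] ⧸ Ideal.span {p}) = Ideal.Quotient.mk (Ideal.span {p}) (X - C s)}
        = e '' (S : Set F) := by
      ext u
      constructor
      · rintro ⟨s, hs, hu⟩
        exact ⟨s, hs, Units.ext (by rw [hval s hs]; exact hu.symm)⟩
      · rintro ⟨s, hs, rfl⟩
        exact ⟨s, hs, hval s hs⟩
    rw [hset, Set.ncard_image_of_injOn, Set.ncard_coe_finset]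
    intro a ha b hb hab
    have : f a = f b := by rw [← hval a ha, ← hval b hb, hab]
    exact mk_X_sub_C_inj p hdeg1 this
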